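/- Let N be a Ding injective right R-module with finite FP-injective dimension (i.e., there exists n ≥ 0 such that Ext^{n+1}_R(F, N) = 0 for all finitely presented right R-modules F). Then N is injective. Consequently, a Ding injective module is either injective or has FP-injective dimension ∞. -/

import Mathlib

/-! Preamble: basic notions of relative homological algebra over a
(possibly noncommutative) ring.  Right `R`-modules are modeled as
(left) modules over the opposite ring `Rᵐᵒᵖ`. -/

open CategoryTheory Opposite

noncomputable section

/-- The Ext group `Ext^n(A, B)` in the category of left `S`-modules,
computed as a derived functor (of `ℤ`-modules). -/
def extGroup (S : Type) [Ring S] (n : ℕ) (A B : ModuleCat.{0} S) : Type :=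
  ((_root_.Ext ℤ (ModuleCat.{0} S) n).obj (op A)).obj B

/-- Vanishing of the Ext group `Ext^n(A, B)`. -/
def extVanish (S : Type) [Ring S] (n : ℕ) (A B : ModuleCat.{0} S) : Prop :=
  Subsingleton (extGroup S n A B)

/-- A module `E` is FP-injective if `Ext¹(F, E) = 0` for every finitely
presented module `F`. -/
def FPInjective (S : Type) [Ring S] (E : ModuleCat.{0} S) : Prop :=
  ∀ F : ModuleCat.{0} S, Module.FinitePresentation S F → extVanish S 1 F E

/-- `E` satisfies the Ext-criterion for FP-injective dimension `≤ n`: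
`Ext^{n+1}(F, E) = 0` for every finitely presented `F`. -/
def fpInjDimLE (S : Type) [Ring S] (E : ModuleCat.{0} S) (n : ℕ) : Prop :=
  ∀ F : ModuleCat.{0} S, Module.FinitePresentation S F → extVanish S (n + 1) F E

/-- `E` has FP-injective dimension exactly `n` : `n` is the least natural number
with `Ext^{n+1}(F, E) = 0` for all finitely presented `F`. -/
def fpInjDimEq (S : Type) [Ring S] (E : ModuleCat.{0} S) (n : ℕ) : Prop :=
  fpInjDimLE S E n ∧ ∀ m : ℕ, fpInjDimLE S E m → n ≤ m

/-- `E` has finite FP-injective dimension. -/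
def fpInjDimFinite (S : Type) [Ring S] (E : ModuleCat.{0} S) : Prop :=
  ∃ n : ℕ, fpInjDimLE S E n

/-- A ring `S` is left coherent if every finitely generated left ideal is
finitely presented (as a left `S`-module). -/
def LeftCoherent (S : Type) [Ring S] : Prop :=
  ∀ I : Submodule S S, I.FG → Module.FinitePresentation S I

/-- A ring `S` is right coherent if its opposite ring is left coherent. -/
def RightCoherent (S : Type) [Ring S] : Prop :=
  LeftCoherent Sᵐᵒᵖ

section BTensor

variable (R : Type) [Ring R]

/-- The subgroup of `A ⊗_ℤ B` by which one quotients to obtain the balanced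
tensor product `A ⊗_R B` of a right `R`-module `A` and a left `R`-module `B`. -/
def btRel (A : Type) [AddCommGroup A] [Module Rᵐᵒᵖ A]
    (B : Type) [AddCommGroup B] [Module R B] :
    Submodule ℤ (TensorProduct ℤ A B) :=
  Submodule.span ℤ
    {x | ∃ (a : A) (r : R) (b : B),
      x = (MulOpposite.op r • a) ⊗ₜ[ℤ] b - a ⊗ₜ[ℤ] (r • b)}

/-- The balanced tensor product `A ⊗_R B` of a right `R`-module `A` and a left
`R`-module `B`, defined as a quotient of `A ⊗_ℤ B`. -/
abbrev BTensor (A : Type) [AddCommGroup A] [Module Rᵐᵒᵖ A]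
    (B : Type) [AddCommGroup B] [Module R B] : Type :=
  TensorProduct ℤ A B ⧸ btRel R A B

variable {A A' : Type} [AddCommGroup A] [Module Rᵐᵒᵖ A] [AddCommGroup A'] [Module Rᵐᵒᵖ A']
variable {B B' : Type} [AddCommGroup B] [Module R B] [AddCommGroup B'] [Module R B']

/-- The map `A ⊗_R B → A ⊗_R B'` induced by a map `f : B → B'` of left
`R`-modules. -/
def BTensor.lmap (f : B →ₗ[R] B') (A : Type) [AddCommGroup A] [Module Rᵐᵒᵖ A] :
    BTensor R A B →ₗ[ℤ] BTensor R A B' :=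
  Submodule.mapQ (btRel R A B) (btRel R A B')
    (TensorProduct.map LinearMap.id f.toAddMonoidHom.toIntLinearMap)
    (by
      rw [btRel, Submodule.span_le]
      rintro x ⟨a, r, b, rfl⟩
      simp only [SetLike.mem_coe, Submodule.mem_comap, map_sub, TensorProduct.map_tmul,
        LinearMap.id_apply, AddMonoidHom.coe_toIntLinearMap, LinearMap.toAddMonoidHom_coe,
        map_smul]
      exact Submodule.subset_span ⟨a, r, f b, by erw [map_sub, TensorProduct.map_tmul, TensorProduct.map_tmul]; simp⟩)

/-- The map `A ⊗_R B → A' ⊗_R B` induced by a map `g : A → A'` of right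
`R`-modules. -/
def BTensor.rmap (g : A →ₗ[Rᵐᵒᵖ] A') (B : Type) [AddCommGroup B] [Module R B] :
    BTensor R A B →ₗ[ℤ] BTensor R A' B :=
  Submodule.mapQ (btRel R A B) (btRel R A' B)
    (TensorProduct.map g.toAddMonoidHom.toIntLinearMap LinearMap.id)
    (by
      rw [btRel, Submodule.span_le]
      rintro x ⟨a, r, b, rfl⟩
      simp only [SetLike.mem_coe, Submodule.mem_comap, map_sub, TensorProduct.map_tmul,
        LinearMap.id_apply, AddMonoidHom.coe_toIntLinearMap, LinearMap.toAddMonoidHom_coe,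
        map_smul]
      exact Submodule.subset_span ⟨g a, r, b, by erw [map_sub, TensorProduct.map_tmul, TensorProduct.map_tmul]; simp⟩)

/-- A right `R`-module `A` is flat if the functor `A ⊗_R —` preserves
injectivity of maps of left `R`-modules. -/
def FlatRight (A : ModuleCat.{0} Rᵐᵒᵖ) : Prop :=
  ∀ (B B' : ModuleCat.{0} R) (f : B →ₗ[R] B'),
    Function.Injective f → Function.Injective (BTensor.lmap R f A)

/-- A left `R`-module `B` is flat if the functor `— ⊗_R B` preserves
injectivity of maps of right `R`-modules. -/
def FlatLeft (B : ModuleCat.{0} R) : Prop :=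
  ∀ (A A' : ModuleCat.{0} Rᵐᵒᵖ) (g : A →ₗ[Rᵐᵒᵖ] A'),
    Function.Injective g → Function.Injective (BTensor.rmap R g B)

end BTensor

/-- A module `N` is Ding injective if there is a doubly infinite exact sequence
of injective modules, with `N` as one of the kernels, which stays exact after
applying `Hom(E, —)` for every FP-injective module `E`. -/
def DingInjective (S : Type) [Ring S] (N : ModuleCat.{0} S) : Prop :=
  ∃ (I : ℤ → ModuleCat.{0} S) (d : ∀ n : ℤ, I n →ₗ[S] I (n + 1)),
    (∀ n, Module.Injective S (I n)) ∧
    (∀ n, Function.Exact (d n) (d (n + 1))) ∧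
    Nonempty (N ≃ₗ[S] LinearMap.ker (d 0)) ∧
    (∀ E : ModuleCat.{0} S, FPInjective S E → ∀ n : ℤ,
      Function.Exact (fun g : E →ₗ[S] I n => (d n).comp g)
        (fun g : E →ₗ[S] I (n + 1) => (d (n + 1)).comp g))

/-- A right `R`-module `M` is Ding projective if there is a doubly infinite
exact sequence of projective right modules, with `M` as one of the kernels,
which stays exact after applying `Hom(—, F)` for every flat right module `F`. -/
def DingProjective (R : Type) [Ring R] (M : ModuleCat.{0} Rᵐᵒᵖ) : Prop :=
  ∃ (P : ℤ → ModuleCat.{0} Rᵐᵒᵖ) (d : ∀ n : ℤ, P n →ₗ[Rᵐᵒᵖ] P (n + 1)),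
    (∀ n, Module.Projective Rᵐᵒᵖ (P n)) ∧
    (∀ n, Function.Exact (d n) (d (n + 1))) ∧
    Nonempty (M ≃ₗ[Rᵐᵒᵖ] LinearMap.ker (d 0)) ∧
    (∀ F : ModuleCat.{0} Rᵐᵒᵖ, FlatRight R F → ∀ n : ℤ,
      Function.Exact (fun g : P (n + 1 + 1) →ₗ[Rᵐᵒᵖ] F => g.comp (d (n + 1)))
        (fun g : P (n + 1) →ₗ[Rᵐᵒᵖ] F => g.comp (d n)))

/-- A right `R`-module `M` is Ding flat if there is a doubly infinite exact
sequence of flat right modules, with `M` as one of the kernels, which stays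
exact after applying `— ⊗_R E` for every FP-injective left module `E`. -/
def DingFlat (R : Type) [Ring R] (M : ModuleCat.{0} Rᵐᵒᵖ) : Prop :=
  ∃ (F : ℤ → ModuleCat.{0} Rᵐᵒᵖ) (d : ∀ n : ℤ, F n →ₗ[Rᵐᵒᵖ] F (n + 1)),
    (∀ n, FlatRight R (F n)) ∧
    (∀ n, Function.Exact (d n) (d (n + 1))) ∧
    Nonempty (M ≃ₗ[Rᵐᵒᵖ] LinearMap.ker (d 0)) ∧
    (∀ E : ModuleCat.{0} R, FPInjective R E → ∀ n : ℤ,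
      Function.Exact (BTensor.rmap R (d n) E) (BTensor.rmap R (d (n + 1)) E))

/-- A left `R`-module `M` is Gorenstein flat if there is a doubly infinite
exact sequence of flat left modules, with `M` as one of the kernels, which
stays exact after applying `E ⊗_R —` for every injective right module `E`. -/
def GorensteinFlat (R : Type) [Ring R] (M : ModuleCat.{0} R) : Prop :=
  ∃ (F : ℤ → ModuleCat.{0} R) (d : ∀ n : ℤ, F n →ₗ[R] F (n + 1)),
    (∀ n, FlatLeft R (F n)) ∧
    (∀ n, Function.Exact (d n) (d (n + 1))) ∧
    Nonempty (M ≃ₗ[R] LinearMap.ker (d 0)) ∧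
    (∀ E : ModuleCat.{0} Rᵐᵒᵖ, Module.Injective Rᵐᵒᵖ E → ∀ n : ℤ,
      Function.Exact (BTensor.lmap R (d n) E) (BTensor.lmap R (d (n + 1)) E))

/-- A right `R`-module `M` has flat dimension `≤ n` : there is an exact
resolution `0 → F_n → ⋯ → F_0 → M → 0` by flat right modules (encoded as an
`ℕ`-indexed resolution which vanishes beyond degree `n`). -/
def flatDimLE (R : Type) [Ring R] (M : ModuleCat.{0} Rᵐᵒᵖ) (n : ℕ) : Prop :=
  ∃ (F : ℕ → ModuleCat.{0} Rᵐᵒᵖ) (d : ∀ k : ℕ, F (k + 1) →ₗ[Rᵐᵒᵖ] F k)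
    (ε : F 0 →ₗ[Rᵐᵒᵖ] M),
    (∀ k, FlatRight R (F k)) ∧
    Function.Surjective ε ∧
    Function.Exact (d 0) ε ∧
    (∀ k, Function.Exact (d (k + 1)) (d k)) ∧
    (∀ k, n < k → Subsingleton (F k))

/-- A right `R`-module has finite flat dimension. -/
def flatDimFinite (R : Type) [Ring R] (M : ModuleCat.{0} Rᵐᵒᵖ) : Prop :=
  ∃ n : ℕ, flatDimLE R M n

/-- A ring `R` is an `n`-FC ring if it is left and right coherent and has left
and right self FP-injective dimension equal to `n`. -/
def IsFCRing (R : Type) [Ring R] (n : ℕ) : Prop :=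
  LeftCoherent R ∧ RightCoherent R ∧
    fpInjDimEq R (ModuleCat.of R R) n ∧
    fpInjDimEq Rᵐᵒᵖ (ModuleCat.of Rᵐᵒᵖ Rᵐᵒᵖ) n

/-- A ring is Ding-Chen if it is an `n`-FC ring for some `n`. -/
def IsDingChen (R : Type) [Ring R] : Prop :=
  ∃ n : ℕ, IsFCRing R n

end

namespace Statement3Aux

open CategoryTheory Opposite

noncomputable section

variable {S : Type} [Ring S]

lemma subsingleton_of_isZero {M : ModuleCat.{0} ℤ} (h : Limits.IsZero M) :
    Subsingleton M := by
  refine ⟨fun a b => ?_⟩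
  have h1 : (𝟙 M : M ⟶ M) = 0 := h.eq_of_src _ _
  calc a = (𝟙 M : M ⟶ M) a := rfl
    _ = (0 : M ⟶ M) a := by rw [h1]
    _ = (𝟙 M : M ⟶ M) b := by rw [h1]; rfl
    _ = b := rfl

lemma extVanish_of_iso {n : ℕ} {F E E' : ModuleCat.{0} S} (e : E ≅ E')
    (h : extVanish S n F E) : extVanish S n F E' := by
  haveI : Subsingleton (((_root_.Ext ℤ (ModuleCat.{0} S) n).obj (op F)).obj E) := h
  exact Equiv.subsingleton
    ((forget (ModuleCat ℤ)).mapIso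
      (((_root_.Ext ℤ (ModuleCat.{0} S) n).obj (op F)).mapIso e.symm)).toEquiv

lemma extVanish_iff_criterion (F E : ModuleCat.{0} S) (P : ProjectiveResolution F) (n : ℕ) :
    extVanish S (n + 1) F E ↔
      ∀ g : P.complex.X (n + 1) ⟶ E, P.complex.d (n + 2) (n + 1) ≫ g = 0 →
        ∃ h : P.complex.X n ⟶ E, P.complex.d (n + 1) n ≫ h = g := by
  have e := P.isoExt (R := ℤ) (n + 1) E
  have h1 := (P.complex.linearYonedaObj ℤ E).exactAt_iff_isZero_homology (n + 1)
  have h2 := (P.complex.linearYonedaObj ℤ E).exactAt_iff' n (n + 1) (n + 2) (by simp) (by simp)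
  rw [ShortComplex.moduleCat_exact_iff] at h2
  constructor
  · intro hv
    haveI : Subsingleton (((_root_.Ext ℤ (ModuleCat.{0} S) (n + 1)).obj (op F)).obj E) := hv
    haveI hsub : Subsingleton ((P.complex.linearYonedaObj ℤ E).homology (n + 1)) :=
      Equiv.subsingleton ((forget (ModuleCat ℤ)).mapIso e.symm).toEquiv
    exact h2.mp (h1.mpr (ModuleCat.isZero_of_subsingleton _))
  · intro hc
    have hz := h1.mp (h2.mpr hc)
    haveI : Subsingleton ((P.complex.linearYonedaObj ℤ E).homology (n + 1)) :=
      subsingleton_of_isZero hz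
    exact Equiv.subsingleton ((forget (ModuleCat ℤ)).mapIso e).toEquiv

/-- Criterion in plain linear-map form. -/
lemma extVanish_iff_criterion' (F : ModuleCat.{0} S) (P : ProjectiveResolution F) (n : ℕ)
    (E₀ : Type) [AddCommGroup E₀] [Module S E₀] :
    extVanish S (n + 1) F (ModuleCat.of S E₀) ↔
      ∀ g : (P.complex.X (n + 1) : Type) →ₗ[S] E₀,
        g ∘ₗ (P.complex.d (n + 2) (n + 1)).hom = 0 →
        ∃ h : (P.complex.X n : Type) →ₗ[S] E₀,
          h ∘ₗ (P.complex.d (n + 1) n).hom = g := by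
  rw [extVanish_iff_criterion F (ModuleCat.of S E₀) P n]
  constructor
  · intro H g hg
    obtain ⟨h, hh⟩ := H (ModuleCat.ofHom g) (by ext x; exact LinearMap.congr_fun hg x)
    exact ⟨h.hom, congrArg ModuleCat.Hom.hom hh⟩
  · intro H g hg
    obtain ⟨h, hh⟩ := H g.hom (congrArg ModuleCat.Hom.hom hg)
    exact ⟨ModuleCat.ofHom h, by ext x; exact LinearMap.congr_fun hh x⟩

lemma extVanish_of_injective (F : ModuleCat.{0} S) (E₀ : Type) [AddCommGroup E₀] [Module S E₀]
    (hE : Module.Injective S E₀) (n : ℕ) :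
    extVanish S (n + 1) F (ModuleCat.of S E₀) := by
  let P := ProjectiveResolution.of F
  rw [extVanish_iff_criterion' F P n E₀]
  intro g hg
  set f : (P.complex.X (n + 1) : Type) →ₗ[S] (P.complex.X n : Type) :=
    (P.complex.d (n + 1) n).hom with hf
  have hker : LinearMap.ker f ≤ LinearMap.ker g := by
    intro x hx
    have hex := P.exact_succ n
    rw [ShortComplex.moduleCat_exact_iff] at hex
    obtain ⟨y, hy⟩ := hex x hx
    have h1 : g x = (g ∘ₗ (P.complex.d (n + 2) (n + 1)).hom) y := by
      rw [← hy]; rfl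
    rw [LinearMap.mem_ker, h1, hg]
    rfl
  obtain ⟨h, hh⟩ := hE.out (LinearMap.range f).subtype (Submodule.injective_subtype _)
    (((LinearMap.ker f).liftQ g hker).comp f.quotKerEquivRange.symm.toLinearMap)
  refine ⟨h, ?_⟩
  ext x
  have hx : f.quotKerEquivRange.symm ⟨f x, LinearMap.mem_range_self f x⟩ =
      Submodule.Quotient.mk x := by
    rw [LinearEquiv.symm_apply_eq]
    exact Subtype.ext (f.quotKerEquivRange_apply_mk x).symm
  have h5 := hh ⟨f x, LinearMap.mem_range_self f x⟩
  simp only [Submodule.coe_subtype, LinearMap.coe_comp, Function.comp_apply,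
    LinearEquiv.coe_coe] at h5
  rw [hx] at h5
  show h (f x) = g x
  rw [h5]
  rfl

lemma extVanish_range_of_extVanish_ker {I₀ J₀ : Type} [AddCommGroup I₀] [Module S I₀]
    [AddCommGroup J₀] [Module S J₀] (f : I₀ →ₗ[S] J₀)
    (hI : Module.Injective S I₀) (F : ModuleCat.{0} S) (m : ℕ)
    (hA : extVanish S (m + 2) F (ModuleCat.of S ↥(LinearMap.ker f))) :
    extVanish S (m + 1) F (ModuleCat.of S ↥(LinearMap.range f)) := by
  let P := ProjectiveResolution.of F
  have hA' := (extVanish_iff_criterion' F P (m + 1) ↥(LinearMap.ker f)).mp hA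
  have hI' := (extVanish_iff_criterion' F P m I₀).mp (extVanish_of_injective F I₀ hI m)
  rw [extVanish_iff_criterion' F P m ↥(LinearMap.range f)]
  intro g hg
  set d21 : (P.complex.X (m + 2) : Type) →ₗ[S] (P.complex.X (m + 1) : Type) :=
    (P.complex.d (m + 2) (m + 1)).hom with hd21
  set d32 : (P.complex.X (m + 3) : Type) →ₗ[S] (P.complex.X (m + 2) : Type) :=
    (P.complex.d (m + 3) (m + 2)).hom with hd32
  set d10 : (P.complex.X (m + 1) : Type) →ₗ[S] (P.complex.X m : Type) :=
    (P.complex.d (m + 1) m).hom with hd10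
  let π : I₀ →ₗ[S] ↥(LinearMap.range f) := f.rangeRestrict
  have hπ : Function.Surjective π := f.surjective_rangeRestrict
  haveI : Module.Projective S (P.complex.X (m + 1) : Type) :=
    (IsProjective.iff_projective _).mpr (P.projective (m + 1))
  obtain ⟨gt, hfac⟩ := Module.projective_lifting_property π g hπ
  let k0 : (P.complex.X (m + 2) : Type) →ₗ[S] I₀ := gt ∘ₗ d21
  have hmem : ∀ x, k0 x ∈ LinearMap.ker f := by
    intro x
    have h1 : π (k0 x) = (g ∘ₗ d21) x := by
      rw [← hfac]; rfl
    rw [hg] at h1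
    have h2 : f (k0 x) = ((π (k0 x) : ↥(LinearMap.range f)) : J₀) := rfl
    rw [LinearMap.mem_ker, h2, h1]
    rfl
  let k : (P.complex.X (m + 2) : Type) →ₗ[S] ↥(LinearMap.ker f) :=
    LinearMap.codRestrict (LinearMap.ker f) k0 hmem
  have hdd : d21 ∘ₗ d32 = 0 := by
    have := P.complex.d_comp_d (m + 3) (m + 2) (m + 1)
    exact congrArg ModuleCat.Hom.hom this
  have hk : k ∘ₗ d32 = 0 := by
    ext x
    simp only [LinearMap.comp_apply, LinearMap.zero_apply, ZeroMemClass.coe_zero]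
    show k0 (d32 x) = 0
    have h6 : k0 (d32 x) = gt ((d21 ∘ₗ d32) x) := rfl
    rw [h6, hdd]
    exact map_zero gt
  obtain ⟨hA1, hhA⟩ := hA' k hk
  let gt' : (P.complex.X (m + 1) : Type) →ₗ[S] I₀ := gt - (LinearMap.ker f).subtype ∘ₗ hA1
  have hgt' : gt' ∘ₗ d21 = 0 := by
    rw [LinearMap.sub_comp, LinearMap.comp_assoc, hhA]
    ext x
    show k0 x - ((k x : ↥(LinearMap.ker f)) : I₀) = 0
    rw [show ((k x : ↥(LinearMap.ker f)) : I₀) = k0 x from rfl, sub_self]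
  obtain ⟨hI1, hhI⟩ := hI' gt' hgt'
  refine ⟨π ∘ₗ hI1, ?_⟩
  rw [LinearMap.comp_assoc, hhI]
  have hπs : π ∘ₗ (LinearMap.ker f).subtype = 0 := by
    ext a
    simp only [LinearMap.comp_apply, LinearMap.zero_apply, ZeroMemClass.coe_zero,
      Submodule.coe_subtype]
    exact a.2
  show π ∘ₗ (gt - (LinearMap.ker f).subtype ∘ₗ hA1) = g
  rw [LinearMap.comp_sub, hfac, ← LinearMap.comp_assoc, hπs, LinearMap.zero_comp, sub_zero]

lemma injective_of_retract {M N : Type} [AddCommGroup M] [Module S M]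
    [AddCommGroup N] [Module S N]
    (hM : Module.Injective S M) (p : M →ₗ[S] N) (h : N →ₗ[S] M) (hph : ∀ x, p (h x) = x) :
    Module.Injective S N := by
  constructor
  intro X Y _ _ _ _ f hf g
  obtain ⟨H, hH⟩ := hM.out f hf (h ∘ₗ g)
  refine ⟨p ∘ₗ H, fun x => ?_⟩
  simp only [LinearMap.coe_comp, Function.comp_apply, hH x, hph]

lemma splitting (I : ℤ → ModuleCat.{0} S) (d : ∀ n : ℤ, I n →ₗ[S] I (n + 1))
    (hexact : ∀ n, Function.Exact (d n) (d (n + 1)))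
    (hhom : ∀ E : ModuleCat.{0} S, FPInjective S E → ∀ n : ℤ,
      Function.Exact (fun g : E →ₗ[S] I n => (d n).comp g)
        (fun g : E →ₗ[S] I (n + 1) => (d (n + 1)).comp g))
    (k : ℤ) (hFP : FPInjective S (ModuleCat.of S ↥(LinearMap.ker (d (k + 1))))) :
    ∃ (h : ↥(LinearMap.ker (d (k + 1))) →ₗ[S] I k)
      (p : (I k : Type) →ₗ[S] ↥(LinearMap.ker (d (k + 1)))),
      ((d k) ∘ₗ h = (LinearMap.ker (d (k + 1))).subtype) ∧
      ((LinearMap.ker (d (k + 1))).subtype ∘ₗ p = d k) ∧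
      (p ∘ₗ h = LinearMap.id) := by
  let ι : ↥(LinearMap.ker (d (k + 1))) →ₗ[S] I (k + 1) := (LinearMap.ker (d (k + 1))).subtype
  have hι : (d (k + 1)).comp ι = 0 := by
    ext e
    exact e.2
  obtain ⟨h0, hh0⟩ :=
    (hhom (ModuleCat.of S ↥(LinearMap.ker (d (k + 1)))) hFP k ι).mp hι
  let h : ↥(LinearMap.ker (d (k + 1))) →ₗ[S] I k := h0
  have hh : (d k) ∘ₗ h = (LinearMap.ker (d (k + 1))).subtype := hh0
  let p : (I k : Type) →ₗ[S] ↥(LinearMap.ker (d (k + 1))) :=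
    LinearMap.codRestrict (LinearMap.ker (d (k + 1))) (d k)
      (fun x => (hexact k).apply_apply_eq_zero x)
  refine ⟨h, p, hh, LinearMap.subtype_comp_codRestrict _ _ _, ?_⟩
  ext e
  exact DFunLike.congr_fun hh e

lemma upper_injective (I : ℤ → ModuleCat.{0} S) (d : ∀ n : ℤ, I n →ₗ[S] I (n + 1))
    (hinj : ∀ n, Module.Injective S (I n))
    (hexact : ∀ n, Function.Exact (d n) (d (n + 1)))
    (hhom : ∀ E : ModuleCat.{0} S, FPInjective S E → ∀ n : ℤ,
      Function.Exact (fun g : E →ₗ[S] I n => (d n).comp g)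
        (fun g : E →ₗ[S] I (n + 1) => (d (n + 1)).comp g))
    (k : ℤ) (hFP : FPInjective S (ModuleCat.of S ↥(LinearMap.ker (d (k + 1))))) :
    Module.Injective S ↥(LinearMap.ker (d (k + 1))) := by
  obtain ⟨h, p, _, _, hid⟩ := splitting I d hexact hhom k hFP
  exact injective_of_retract (hinj k) p h (fun x => DFunLike.congr_fun hid x)

lemma lower_injective (I : ℤ → ModuleCat.{0} S) (d : ∀ n : ℤ, I n →ₗ[S] I (n + 1))
    (hinj : ∀ n, Module.Injective S (I n))
    (hexact : ∀ n, Function.Exact (d n) (d (n + 1)))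
    (hhom : ∀ E : ModuleCat.{0} S, FPInjective S E → ∀ n : ℤ,
      Function.Exact (fun g : E →ₗ[S] I n => (d n).comp g)
        (fun g : E →ₗ[S] I (n + 1) => (d (n + 1)).comp g))
    (k : ℤ) (hFP : FPInjective S (ModuleCat.of S ↥(LinearMap.ker (d (k + 1))))) :
    Module.Injective S ↥(LinearMap.ker (d k)) := by
  obtain ⟨h, p, hh, hsub, hid⟩ := splitting I d hexact hhom k hFP
  have hmem : ∀ x : (I k : Type), x - h (p x) ∈ LinearMap.ker (d k) := by
    intro x
    have h1 : (d k) (h (p x)) = ((LinearMap.ker (d (k + 1))).subtype) (p x) :=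
      DFunLike.congr_fun hh (p x)
    have h2 : ((LinearMap.ker (d (k + 1))).subtype) (p x) = (d k) x :=
      DFunLike.congr_fun hsub x
    rw [LinearMap.mem_ker, map_sub, h1, h2, sub_self]
  let r : (I k : Type) →ₗ[S] ↥(LinearMap.ker (d k)) :=
    LinearMap.codRestrict (LinearMap.ker (d k)) (LinearMap.id - h ∘ₗ p) hmem
  refine injective_of_retract (hinj k) r (LinearMap.ker (d k)).subtype (fun e => ?_)
  have hpe : p ((e : (I k : Type))) = 0 := by
    refine Subtype.ext ?_
    have h2 : ((LinearMap.ker (d (k + 1))).subtype) (p (e : (I k : Type))) =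
        (d k) (e : (I k : Type)) := DFunLike.congr_fun hsub (e : (I k : Type))
    have h3 : ((LinearMap.ker (d (k + 1))).subtype) (p (e : (I k : Type))) = 0 := by
      rw [h2]; exact e.2
    simpa using h3
  refine Subtype.ext ?_
  show (e : (I k : Type)) - h (p (e : (I k : Type))) = (e : (I k : Type))
  rw [hpe, map_zero, sub_zero]

lemma main_induction : ∀ n : ℕ, ∀ (I : ℤ → ModuleCat.{0} S)
    (d : ∀ k : ℤ, I k →ₗ[S] I (k + 1)),
    (∀ k, Module.Injective S (I k)) →
    (∀ k, Function.Exact (d k) (d (k + 1))) →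
    (∀ E : ModuleCat.{0} S, FPInjective S E → ∀ k : ℤ,
      Function.Exact (fun g : E →ₗ[S] I k => (d k).comp g)
        (fun g : E →ₗ[S] I (k + 1) => (d (k + 1)).comp g)) →
    fpInjDimLE S (ModuleCat.of S ↥(LinearMap.ker (d 0))) n →
    Module.Injective S ↥(LinearMap.ker (d 0))
  | 0, I, d, hinj, hexact, hhom, hdim => by
    have hFP : FPInjective S (ModuleCat.of S ↥(LinearMap.ker (d ((-1 : ℤ) + 1)))) := hdim
    exact upper_injective I d hinj hexact hhom (-1) hFP
  | (n + 1), I, d, hinj, hexact, hhom, hdim => by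
    have hker : LinearMap.ker (d ((0 : ℤ) + 1)) = LinearMap.range (d 0) :=
      LinearMap.exact_iff.mp (hexact 0)
    have hdim' : fpInjDimLE S (ModuleCat.of S ↥(LinearMap.ker (d ((0 : ℤ) + 1)))) n := by
      rw [hker]
      intro F hF
      exact extVanish_range_of_extVanish_ker (d 0) (hinj 0) F n (hdim F hF)
    have IH := main_induction n (fun k => I (k + 1)) (fun k => d (k + 1))
      (fun k => hinj (k + 1)) (fun k => hexact (k + 1))
      (fun E hE k => hhom E hE (k + 1)) hdim'
    have hFP : FPInjective S (ModuleCat.of S ↥(LinearMap.ker (d ((0 : ℤ) + 1)))) :=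
      fun F _ => extVanish_of_injective F _ IH 0
    exact lower_injective I d hinj hexact hhom 0 hFP

end

end Statement3Aux

/-- A Ding injective right `R`-module of finite FP-injective
dimension is injective. -/
theorem statement3 (R : Type) [Ring R] (N : ModuleCat.{0} Rᵐᵒᵖ)
    (hN : DingInjective Rᵐᵒᵖ N)
    (hfin : ∃ n : ℕ, fpInjDimLE Rᵐᵒᵖ N n) :
    Module.Injective Rᵐᵒᵖ N := by
  obtain ⟨I, d, hinj, hexact, ⟨eN⟩, hhom⟩ := hN
  obtain ⟨n, hdim⟩ := hfin
  have hdim' : fpInjDimLE Rᵐᵒᵖ (ModuleCat.of Rᵐᵒᵖ ↥(LinearMap.ker (d 0))) n := by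
    intro F hF
    exact Statement3Aux.extVanish_of_iso eN.toModuleIso (hdim F hF)
  have hmain := Statement3Aux.main_induction n I d hinj hexact hhom hdim'
  exact Statement3Aux.injective_of_retract hmain eN.symm.toLinearMap eN.toLinearMap
    (fun x => eN.symm_apply_apply x)
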